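/- K(sin(π/12)) = (1/(2√3))·√(π/√3)·Γ(1/6)/Γ(2/3), where K(k) := ∫₀^{π/2} dθ/√(1 − k² sin²θ). -/

import Mathlib

open Real Set MeasureTheory intervalIntegral

noncomputable def Dd (x : ℝ) : ℝ := (1 + Real.sqrt 3) + (1 - Real.sqrt 3) * Real.cos x
noncomputable def Ff (x : ℝ) : ℝ := ((1 + Real.cos x) / Dd x)^3
noncomputable def gg (u : ℝ) : ℝ := u ^ (-(5/6) : ℝ) * (1 - u) ^ (-(1/2) : ℝ)

lemma hr2 : (Real.sqrt 3)^2 = 3 := Real.sq_sqrt (by norm_num)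
lemma hr1 : 1 < Real.sqrt 3 := by nlinarith [hr2, Real.sqrt_nonneg 3]
lemma hrlt : Real.sqrt 3 < 2 := by nlinarith [hr2, Real.sqrt_nonneg 3]

lemma Dd_ge (x : ℝ) : 2 ≤ Dd x := by
  have h1 := Real.cos_le_one x
  have h2 := Real.neg_one_le_cos x
  unfold Dd; nlinarith [hr1]

lemma Dd_pos (x : ℝ) : 0 < Dd x := lt_of_lt_of_le (by norm_num) (Dd_ge x)

lemma Ff_deriv (x : ℝ) :
    HasDerivAt Ff (-(6 * Real.sqrt 3 * Real.sin x * (1 + Real.cos x)^2 / (Dd x)^4)) x := by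
  have hD : Dd x ≠ 0 := ne_of_gt (Dd_pos x)
  have h1 : HasDerivAt (fun y => 1 + Real.cos y) (-Real.sin x) x :=
    (Real.hasDerivAt_cos x).const_add 1
  have h2 : HasDerivAt Dd ((1 - Real.sqrt 3) * -Real.sin x) x := by
    unfold Dd
    exact ((Real.hasDerivAt_cos x).const_mul _).const_add _
  have h3 := (h1.div h2 hD).pow 3
  convert h3 using 1
  case e'_4 => rfl
  case e'_5 => rfl
  case e'_8 => rfl
  simp only [Pi.div_apply]
  norm_num
  rw [show Dd x = (1 + Real.sqrt 3) + (1 - Real.sqrt 3) * Real.cos x from rfl]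
  have hD' : (1 + Real.sqrt 3) + (1 - Real.sqrt 3) * Real.cos x ≠ 0 := by
    rw [show (1 + Real.sqrt 3) + (1 - Real.sqrt 3) * Real.cos x = Dd x from rfl]; exact hD
  field_simp
  ring

lemma Ipoly (r c : ℝ) (h : r^2 = 3) :
    r * ((1+c) * (((1+r)+(1-r)*c)^3 - (1+c)^3))
      = 36 * ((1-c^2) * (1 - (2-r)/4*(1-c^2))) := by
  linear_combination (6 - 6*c^4 + 3*r - 6*r*c^2 + 3*r*c^4 + r^2 - 2*r^2*c + 2*r^2*c^3 - r^2*c^4) * h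

lemma key_alg (c s q D : ℝ) (hsc : s^2 = 1 - c^2) (hs : 0 < s)
    (hc1 : 0 < 1 + c) (hc2 : 0 < 1 - c)
    (hD : D = (1 + Real.sqrt 3) + (1 - Real.sqrt 3) * c)
    (hq : q = (1 + c) / D) :
    -(6 * Real.sqrt 3 * s * (1 + c)^2 / D^4) * ((q^3) ^ (-(5/6):ℝ) * (1 - q^3) ^ (-(1/2):ℝ))
      = -(Real.sqrt 3 * Real.sqrt (Real.sqrt 3) / Real.sqrt (1 - (2 - Real.sqrt 3)/4 * s^2)) := by
  set r := Real.sqrt 3 with hrdef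
  have hr2 : r^2 = 3 := hr2
  have hr1 : 1 < r := hr1
  have hr0 : 0 < r := by linarith
  subst hD
  set D := (1 + r) + (1 - r) * c with hDdef
  have hDpos : 0 < D := by rw [hDdef]; nlinarith
  have hq0 : 0 < q := by rw [hq]; positivity
  have hq1 : q < 1 := by
    rw [hq, div_lt_one hDpos, hDdef]; nlinarith
  have hq31 : q^3 < 1 := by
    calc q^3 < 1^3 := by exact pow_lt_pow_left₀ hq1 hq0.le (by norm_num)
    _ = 1 := one_pow 3
  have hq30 : 0 < q^3 := by positivity
  have hP : 0 < 1 - (2 - r)/4 * s^2 := by nlinarith [sq_nonneg c]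
  have hqD : q * D = 1 + c := by rw [hq]; field_simp
  set P := 1 - (2 - r)/4 * s^2 with hPdef
  -- rewrite rpow as sqrt
  have e1 : (q^3 : ℝ) ^ (-(5/6):ℝ) = (q^2 * Real.sqrt q)⁻¹ := by
    rw [← Real.rpow_natCast q 3, ← Real.rpow_mul hq0.le,
      show ((3:ℕ):ℝ) * (-(5/6):ℝ) = -(5/2 : ℝ) by norm_num,
      Real.rpow_neg hq0.le,
      show ((5/2):ℝ) = ((2:ℕ):ℝ) + (1/2:ℝ) by norm_num,
      Real.rpow_add hq0, Real.rpow_natCast, ← Real.sqrt_eq_rpow]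
  have e2 : (1 - q^3 : ℝ) ^ (-(1/2):ℝ) = (Real.sqrt (1 - q^3))⁻¹ := by
    rw [Real.rpow_neg (by linarith), ← Real.sqrt_eq_rpow]
  rw [e1, e2]
  have expand : q * (1 - q^3) * (r * D^4) = r * ((1+c) * (D^3 - (1+c)^3)) := by
    rw [hq]
    field_simp
  have hIp := Ipoly r c hr2
  have hXval : q * (1 - q^3) = (6 * s / D^2)^2 * (P / r) := by
    have h4 : (6*s/D^2)^2 * (P/r) = 36*s^2*P/(r*D^4) := by
      field_simp; ring
    rw [h4, eq_div_iff (by positivity)]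
    rw [hPdef, hDdef] at *
    linear_combination expand + hIp + (-36 + 9*(2-r)*(s^2+(1-c^2)))*hsc
  have hsqrtX : Real.sqrt q * Real.sqrt (1 - q^3)
      = (6 * s / D^2) * (Real.sqrt P / Real.sqrt r) := by
    rw [← Real.sqrt_mul hq0.le, hXval, Real.sqrt_mul (sq_nonneg _),
      Real.sqrt_sq (by positivity), Real.sqrt_div hP.le]
  have hsP : 0 < Real.sqrt P := Real.sqrt_pos.2 hP
  have hsq : 0 < Real.sqrt q := Real.sqrt_pos.2 hq0
  have hsr : 0 < Real.sqrt r := Real.sqrt_pos.2 hr0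
  have hsX : 0 < Real.sqrt (1 - q^3) := Real.sqrt_pos.2 (by linarith)
  have hrr : Real.sqrt r * Real.sqrt r = r := Real.mul_self_sqrt hr0.le
  have hc2' : (1+c)^2 = q^2 * D^2 := by linear_combination (-(1+c)-q*D)*hqD
  rw [show -(6 * r * s * (1 + c)^2 / D^4) * ((q^2 * Real.sqrt q)⁻¹ * (Real.sqrt (1-q^3))⁻¹)
      = -(6 * r * s * (1 + c)^2 / (D^4 * q^2 * (Real.sqrt q * Real.sqrt (1-q^3)))) by
    field_simp, neg_inj, hsqrtX, hc2']
  rw [div_eq_div_iff (by positivity) (by positivity)]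
  field_simp

lemma gg_integrableOn : IntegrableOn gg (Set.Icc (0:ℝ) 1) := by
  have h := (Complex.betaIntegral_convergent (u := 1/6) (v := 1/2)
    (by norm_num) (by norm_num)).1
  rw [integrableOn_Icc_iff_integrableOn_Ioc]
  have h2 : IntegrableOn (fun x : ℝ =>
      ((x:ℂ) ^ ((1/6:ℂ)-1) * ((1:ℂ)-(x:ℂ)) ^ ((1/2:ℂ)-1)).re) (Set.Ioc 0 1) := h.re
  apply h2.congr_fun ?_ measurableSet_Ioc
  intro x hx
  have hx0 : (0:ℝ) ≤ x := hx.1.le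
  have hx1 : (0:ℝ) ≤ 1 - x := by linarith [hx.2]
  simp only
  rw [show ((1/6:ℂ)-1) = ((-(5/6):ℝ):ℂ) by norm_num,
    show ((1/2:ℂ)-1) = ((-(1/2):ℝ):ℂ) by norm_num,
    show ((1:ℂ)-(x:ℂ)) = (((1-x:ℝ)):ℂ) by push_cast; ring,
    ← Complex.ofReal_cpow hx0, ← Complex.ofReal_cpow hx1,
    ← Complex.ofReal_mul, Complex.ofReal_re]
  rfl

lemma beta_val : ∫ u in (0:ℝ)..1, gg u
    = Real.sqrt π * Real.Gamma (1/6) / Real.Gamma (2/3) := by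
  have h := Complex.Gamma_mul_Gamma_eq_betaIntegral (s := 1/6) (t := 1/2)
    (by norm_num) (by norm_num)
  have hb : Complex.betaIntegral (1/6) (1/2)
      = ((∫ u in (0:ℝ)..1, gg u : ℝ) : ℂ) := by
    rw [← intervalIntegral.integral_ofReal]
    apply intervalIntegral.integral_congr
    intro x hx
    rw [Set.uIcc_of_le (by norm_num : (0:ℝ) ≤ 1)] at hx
    obtain ⟨h0, h1⟩ := hx
    unfold gg
    push_cast
    rw [Complex.ofReal_cpow h0, Complex.ofReal_cpow (by linarith)]
    push_cast
    norm_num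
  rw [hb] at h
  rw [show (1/6:ℂ) = ((1/6:ℝ):ℂ) by norm_num, show (1/2:ℂ) = ((1/2:ℝ):ℂ) by norm_num] at h
  rw [show ((1/6:ℝ):ℂ)+((1/2:ℝ):ℂ) = ((2/3:ℝ):ℂ) by norm_num] at h
  rw [Complex.Gamma_ofReal, Complex.Gamma_ofReal, Complex.Gamma_ofReal] at h
  rw [← Complex.ofReal_mul, ← Complex.ofReal_mul] at h
  have hr := Complex.ofReal_inj.mp h
  have hpos : 0 < Real.Gamma (2/3) := Real.Gamma_pos_of_pos (by norm_num)
  rw [Real.Gamma_one_half_eq] at hr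
  field_simp
  linarith [hr]

lemma P_pos (x : ℝ) : 0 < 1 - (2 - Real.sqrt 3)/4 * Real.sin x ^ 2 := by
  nlinarith [Real.sin_sq_add_cos_sq x, sq_nonneg (Real.cos x), hr1, hrlt,
    sq_nonneg (Real.sin x)]

lemma psi_cont : Continuous (fun x : ℝ => 1 / Real.sqrt (1 - (2 - Real.sqrt 3)/4 * Real.sin x ^ 2)) := by
  apply Continuous.div continuous_const
  · exact Real.continuous_sqrt.comp (by continuity)
  · exact fun x => ne_of_gt (Real.sqrt_pos.2 (P_pos x))

lemma Ff_cont : Continuous Ff := by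
  unfold Ff
  apply Continuous.pow
  exact (continuous_const.add Real.continuous_cos).div
    (continuous_const.add (continuous_const.mul Real.continuous_cos))
    (fun x => ne_of_gt (Dd_pos x))

lemma Ff_mem_Icc (x : ℝ) : Ff x ∈ Set.Icc (0:ℝ) 1 := by
  have h1 := Real.cos_le_one x
  have h2 := Real.neg_one_le_cos x
  have hD := Dd_pos x
  have hq0 : 0 ≤ (1 + Real.cos x) / Dd x := div_nonneg (by linarith) hD.le
  constructor
  · unfold Ff; exact pow_nonneg hq0 3
  · unfold Ff
    apply pow_le_one₀ hq0
    rw [div_le_one hD]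
    unfold Dd; nlinarith [hr1]

lemma Ff_mem_Ioo (x : ℝ) (hx : x ∈ Set.Ioo 0 π) : Ff x ∈ Set.Ioo (0:ℝ) 1 := by
  have hs : 0 < Real.sin x := Real.sin_pos_of_pos_of_lt_pi hx.1 hx.2
  have hpy := Real.sin_sq_add_cos_sq x
  have h1 : 0 < 1 + Real.cos x := by nlinarith [Real.neg_one_le_cos x]
  have h2 : 0 < 1 - Real.cos x := by nlinarith [Real.cos_le_one x]
  have hD := Dd_pos x
  constructor
  · unfold Ff; exact pow_pos (div_pos h1 hD) 3
  · unfold Ff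
    apply pow_lt_one₀ (div_nonneg h1.le hD.le) _ (by norm_num)
    rw [div_lt_one hD]
    unfold Dd; nlinarith [hr1]

lemma Ff_zero : Ff 0 = 1 := by
  unfold Ff Dd
  rw [Real.cos_zero]
  rw [show (1 + Real.sqrt 3) + (1 - Real.sqrt 3) * 1 = 2 by ring]
  norm_num

lemma Ff_pi : Ff π = 0 := by
  unfold Ff
  rw [Real.cos_pi]
  norm_num

lemma key (x : ℝ) (hx : x ∈ Set.Ioo 0 π) :
    (-(6 * Real.sqrt 3 * Real.sin x * (1 + Real.cos x)^2 / (Dd x)^4)) * gg (Ff x)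
      = -(Real.sqrt 3 * Real.sqrt (Real.sqrt 3) /
          Real.sqrt (1 - (2 - Real.sqrt 3)/4 * Real.sin x ^ 2)) := by
  have hs : 0 < Real.sin x := Real.sin_pos_of_pos_of_lt_pi hx.1 hx.2
  have hpy := Real.sin_sq_add_cos_sq x
  have h1 : 0 < 1 + Real.cos x := by nlinarith [Real.neg_one_le_cos x]
  have h2 : 0 < 1 - Real.cos x := by nlinarith [Real.cos_le_one x]
  have := key_alg (Real.cos x) (Real.sin x) ((1 + Real.cos x) / Dd x) (Dd x)
    (by nlinarith) hs h1 h2 rfl rfl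
  unfold gg Ff
  exact this

theorem K_sin15_gamma :
    ∫ θ in (0:ℝ)..(π/2),
        1 / Real.sqrt (1 - (Real.sin (π/12))^2 * Real.sin θ ^ 2)
      = (1 / (2 * Real.sqrt 3)) * Real.sqrt (π / Real.sqrt 3) *
          (Real.Gamma (1/6) / Real.Gamma (2/3)) := by
  have hk : (Real.sin (π/12))^2 = (2 - Real.sqrt 3)/4 := by
    have h := Real.sin_sq_eq_half_sub (π/12)
    rw [show 2*(π/12) = π/6 by ring, Real.cos_pi_div_six] at h
    rw [h]; ring
  rw [hk]
  set f : ℝ → ℝ := fun θ => 1 / Real.sqrt (1 - (2 - Real.sqrt 3)/4 * Real.sin θ ^ 2) with hf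
  have hfc : Continuous f := psi_cont
  have hpi : (0:ℝ) ≤ π := Real.pi_pos.le
  -- symmetry
  have hsym : ∫ θ in (0:ℝ)..π, f θ = 2 * ∫ θ in (0:ℝ)..(π/2), f θ := by
    have hadd := intervalIntegral.integral_add_adjacent_intervals
      (hfc.intervalIntegrable (μ := volume) 0 (π/2)) (hfc.intervalIntegrable (μ := volume) (π/2) π)
    have hrefl := intervalIntegral.integral_comp_sub_left (a := (0:ℝ)) (b := π/2) f π
    rw [show π - π/2 = π/2 by ring, sub_zero] at hrefl
    have heq : ∫ x in (0:ℝ)..(π/2), f (π - x) = ∫ x in (0:ℝ)..(π/2), f x := by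
      apply intervalIntegral.integral_congr
      intro x _
      simp only [hf, Real.sin_pi_sub]
    rw [heq] at hrefl
    rw [← hadd, ← hrefl]
    ring
  -- change of variables
  have hmin : min (0:ℝ) π = 0 := min_eq_left hpi
  have hmax : max (0:ℝ) π = π := max_eq_right hpi
  have huIcc : Set.uIcc (0:ℝ) π = Set.Icc 0 π := Set.uIcc_of_le hpi
  have hnull : (volume : Measure ℝ) ({0, π} : Set ℝ) = 0 :=
    (Set.toFinite ({0, π} : Set ℝ)).measure_zero volume
  have hae : ∀ᵐ x : ℝ ∂(volume : Measure ℝ), x ∉ ({0, π} : Set ℝ) :=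
    measure_eq_zero_iff_ae_notMem.mp hnull
  set C : ℝ := Real.sqrt 3 * Real.sqrt (Real.sqrt 3) with hC
  have hCpos : 0 < C := by
    apply mul_pos (by positivity)
    exact Real.sqrt_pos.2 (by positivity)
  set ψ : ℝ → ℝ := fun x => -(C / Real.sqrt (1 - (2 - Real.sqrt 3)/4 * Real.sin x ^ 2)) with hψ
  have hψc : Continuous ψ := by
    have : ψ = fun x => (-C) * f x := by
      funext x; simp only [hψ, hf]; ring
    rw [this]; exact continuous_const.mul hfc
  have hcov := intervalIntegral.integral_comp_smul_deriv''' (a := (0:ℝ)) (b := π)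
    (f := Ff) (f' := fun x => -(6 * Real.sqrt 3 * Real.sin x * (1 + Real.cos x)^2 / (Dd x)^4))
    (g := gg) (Ff_cont.continuousOn)
    (by
      intro x hx
      rw [hmin, hmax] at hx
      exact (Ff_deriv x).hasDerivWithinAt)
    (by
      rw [hmin, hmax]
      apply ContinuousOn.mono (s := Set.Ioo (0:ℝ) 1)
      · intro u hu
        apply ContinuousAt.continuousWithinAt
        apply ContinuousAt.mul
        · exact Real.continuousAt_rpow_const _ _ (Or.inl (ne_of_gt hu.1))
        · exact (Real.continuousAt_rpow_const _ _ (Or.inl (by simp; linarith [hu.2]))).comp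
            ((continuous_const.sub continuous_id).continuousAt)
      · intro u hu
        obtain ⟨x, hx, rfl⟩ := hu
        exact Ff_mem_Ioo x hx)
    (by
      apply gg_integrableOn.mono_set
      rintro _ ⟨x, _, rfl⟩
      exact Ff_mem_Icc x)
    (by
      rw [huIcc]
      have hint : IntegrableOn ψ (Set.Icc 0 π) volume := hψc.integrableOn_Icc
      apply hint.congr
      apply (MeasureTheory.ae_restrict_iff' measurableSet_Icc).mpr
      filter_upwards [hae] with x hx0 hxIcc
      have hxI : x ∈ Set.Ioo 0 π := by
        constructor
        · rcases lt_or_eq_of_le hxIcc.1 with h | h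
          · exact h
          · exact absurd (by rw [← h]; exact Set.mem_insert _ _) hx0
        · rcases lt_or_eq_of_le hxIcc.2 with h | h
          · exact h
          · exact absurd (by rw [h]; exact Set.mem_insert_of_mem _ rfl) hx0
      have := key x hxI
      simp only [hψ, smul_eq_mul, Function.comp]
      rw [← this])
  rw [Ff_zero, Ff_pi] at hcov
  rw [intervalIntegral.integral_symm (0:ℝ) 1, beta_val] at hcov
  have hleft : ∫ x in (0:ℝ)..π,
      (-(6 * Real.sqrt 3 * Real.sin x * (1 + Real.cos x)^2 / (Dd x)^4)) • (gg ∘ Ff) x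
      = (-C) * ∫ x in (0:ℝ)..π, f x := by
    rw [← intervalIntegral.integral_const_mul]
    apply intervalIntegral.integral_congr_ae
    filter_upwards [hae] with x hx0 hxI
    rw [Set.uIoc_of_le hpi] at hxI
    have hxIoo : x ∈ Set.Ioo 0 π := by
      constructor
      · exact hxI.1
      · rcases lt_or_eq_of_le hxI.2 with h | h
        · exact h
        · exact absurd (by rw [h]; exact Set.mem_insert_of_mem _ rfl) hx0
    have := key x hxIoo
    simp only [smul_eq_mul, Function.comp]
    rw [this]
    simp only [hf]
    ring
  rw [hleft, hsym] at hcov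
  -- final arithmetic
  have hsqdiv : Real.sqrt (π / Real.sqrt 3) = Real.sqrt π / Real.sqrt (Real.sqrt 3) :=
    Real.sqrt_div hpi _
  rw [hsqdiv]
  have hr0 : (0:ℝ) < Real.sqrt 3 := by positivity
  have ht0 : (0:ℝ) < Real.sqrt (Real.sqrt 3) := Real.sqrt_pos.2 hr0
  have hG : 0 < Real.Gamma (2/3) := Real.Gamma_pos_of_pos (by norm_num)
  rw [hC] at hcov
  field_simp at hcov ⊢
  linear_combination (-1) * hcov
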